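/- Let Γ = Cay(G, S_{i,j} : 1 ≤ i,j ≤ m) be an m-PCayley digraph of a finite group G (i.e., S_{i,i} = ∅ for all i). Then Γ is mPCI if and only if every semiregular subgroup of Aut(Γ) isomorphic to G whose orbit set equals {G_1, …, G_m} is conjugate to R(G) in Aut(Γ). -/

import Mathlib

/-- Right multiplication permutation `R(g) : x_i ↦ (xg)_i` on `V = Fin m × G`. -/
def Rperm (m : ℕ) {G : Type*} [Group G] (g : G) : Equiv.Perm (Fin m × G) where
  toFun v := (v.1, v.2 * g)
  invFun v := (v.1, v.2 * g⁻¹)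
  left_inv v := by simp
  right_inv v := by simp

/-- The subgroup `R(G) = {R(g) : g ∈ G}` of `Sym(V)`. -/
def RG (m : ℕ) (G : Type*) [Group G] : Subgroup (Equiv.Perm (Fin m × G)) where
  carrier := {σ | ∃ g : G, σ = Rperm m g}
  one_mem' := ⟨1, Equiv.ext fun v => by simp [Rperm]⟩
  mul_mem' := by
    rintro _ _ ⟨g, rfl⟩ ⟨h, rfl⟩
    exact ⟨h * g, Equiv.ext fun v => by simp [Rperm, mul_assoc]⟩
  inv_mem' := by
    rintro _ ⟨g, rfl⟩
    exact ⟨g⁻¹, Equiv.ext fun v => by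
      simp [Rperm, Equiv.Perm.inv_def]⟩

/-- The arc relation of the `m`-Cayley digraph `Cay(G, S_{i,j})`: there is an arc
from `x_i` to `(sx)_j` for each `s ∈ S_{i,j}`. -/
def arcRel (m : ℕ) {G : Type*} [Group G] (S : Fin m → Fin m → Set G)
    (u v : Fin m × G) : Prop :=
  v.2 * u.2⁻¹ ∈ S u.1 v.1

/-- The automorphism group of the `m`-Cayley digraph `Cay(G, S_{i,j})`, as a
subgroup of `Sym(V)`. -/
def digraphAut (m : ℕ) (G : Type*) [Group G] (S : Fin m → Fin m → Set G) :
    Subgroup (Equiv.Perm (Fin m × G)) where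
  carrier := {e | ∀ u v : Fin m × G, arcRel m S (e u) (e v) ↔ arcRel m S u v}
  one_mem' := by intro u v; simp
  mul_mem' := by
    intro a b ha hb u v
    have := (ha (b u) (b v)).trans (hb u v)
    simpa using this
  inv_mem' := by
    intro a ha u v
    have := ha (a⁻¹ u) (a⁻¹ v)
    simpa using this.symm

/-- The `m`-PCayley digraph `Cay(G, S_{i,j})` (all `S_{i,i} = ∅`) is mPCI: every
`m`-PCayley digraph of `G` that is p-isomorphic to it (isomorphic via an
isomorphism keeping `{G_1, …, G_m}` invariant) is its image under an element of
the normalizer of `R(G)` in `Sym(V)`. -/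
def IsMPCI (m : ℕ) (G : Type*) [Group G] (S : Fin m → Fin m → Set G) : Prop :=
  ∀ T : Fin m → Fin m → Set G, (∀ i, T i i = (∅ : Set G)) →
    (∃ e : Equiv.Perm (Fin m × G),
      (∃ τ : Fin m → Fin m, ∀ v : Fin m × G, (e v).1 = τ v.1) ∧
      ∀ u v : Fin m × G, arcRel m S u v ↔ arcRel m T (e u) (e v)) →
    ∃ n ∈ Subgroup.normalizer ((RG m G : Subgroup (Equiv.Perm (Fin m × G))) : Set (Equiv.Perm (Fin m × G))),
      ∀ u v : Fin m × G, arcRel m S u v ↔ arcRel m T (n u) (n v)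

theorem Equiv.Perm.apply_inv_self {α : Type*} (f : Equiv.Perm α) (x : α) : f (f⁻¹ x) = x :=
  f.apply_symm_apply x

theorem Equiv.Perm.inv_apply_self {α : Type*} (f : Equiv.Perm α) (x : α) : f⁻¹ (f x) = x :=
  f.symm_apply_apply x

section Aux

variable {m : ℕ} {G : Type*} [Group G]

@[simp] lemma Rperm_apply (g : G) (v : Fin m × G) : Rperm m g v = (v.1, v.2 * g) := rfl

lemma Rperm_mul (g h : G) : Rperm m g * Rperm m h = Rperm m (h * g) :=
  Equiv.ext fun v => by simp [Rperm, mul_assoc]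

@[simp] lemma Rperm_one : (Rperm m (1 : G)) = 1 :=
  Equiv.ext fun v => by simp [Rperm]

lemma Rperm_injective (hm : 0 < m) : Function.Injective (Rperm m (G := G)) := by
  intro g g' h
  have := congrArg (fun σ : Equiv.Perm (Fin m × G) => (σ (⟨0, hm⟩, 1)).2) h
  simpa using this

lemma mem_RG_iff {σ : Equiv.Perm (Fin m × G)} : σ ∈ RG m G ↔ ∃ g : G, σ = Rperm m g :=
  Iff.rfl

lemma arcRel_Rperm (T : Fin m → Fin m → Set G) (g : G) (u v : Fin m × G) :
    arcRel m T (Rperm m g u) (Rperm m g v) ↔ arcRel m T u v := by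
  simp [arcRel, mul_inv_rev, mul_assoc]

lemma mem_digraphAut_iff {S : Fin m → Fin m → Set G} {e : Equiv.Perm (Fin m × G)} :
    e ∈ digraphAut m G S ↔ ∀ u v, arcRel m S (e u) (e v) ↔ arcRel m S u v :=
  Iff.rfl

end Aux

/-- **Babai-type criterion for mPCI.** An `m`-PCayley digraph
`Γ = Cay(G, S_{i,j})` of a finite group `G` is mPCI if and only if every
semiregular subgroup of `Aut(Γ)` isomorphic to `G` whose orbit set is
`{G_1, …, G_m}` is conjugate to `R(G)` in `Aut(Γ)`. -/
theorem isMPCI_iff_conjugate (G : Type*) [Group G] [Finite G] (m : ℕ)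
    (S : Fin m → Fin m → Set G) (hS : ∀ i, S i i = (∅ : Set G)) :
    IsMPCI m G S ↔
      ∀ H : Subgroup (Equiv.Perm (Fin m × G)), H ≤ digraphAut m G S →
        (∀ h ∈ H, ∀ v : Fin m × G, h v = v → h = 1) →
        (∀ v w : Fin m × G, (∃ h ∈ H, h v = w) ↔ v.1 = w.1) →
        Nonempty (H ≃* G) →
        ∃ a ∈ digraphAut m G S,
          Subgroup.map (MulAut.conj a).toMonoidHom (RG m G) = H := by
  constructor
  · -- IsMPCI → conjugacy criterion
    intro hm H hHle hsemi horb hne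
    obtain ⟨φ0⟩ := hne
    let φ : G ≃* H := φ0.symm
    have hfst : ∀ h : H, ∀ v : Fin m × G, ((h : Equiv.Perm (Fin m × G)) v).1 = v.1 := by
      intro h v
      exact ((horb v ((h : Equiv.Perm (Fin m × G)) v)).mp ⟨h, h.2, rfl⟩).symm
    let e' : Fin m × G → Fin m × G :=
      fun v => ((φ v.2 : Equiv.Perm (Fin m × G)))⁻¹ (v.1, 1)
    have he'fst : ∀ v, (e' v).1 = v.1 := by
      intro v
      have := hfst (φ v.2)⁻¹ (v.1, 1)
      simpa [e'] using this
    have he'R : ∀ (x : G) (v), e' (Rperm m x v) = ((φ x : Equiv.Perm (Fin m × G)))⁻¹ (e' v) := by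
      intro x v
      simp only [e', Rperm_apply, map_mul]
      simp [mul_inv_rev, Equiv.Perm.mul_apply]
    have he'inj : Function.Injective e' := by
      intro v w hvw
      have h1 : v.1 = w.1 := by rw [← he'fst v, ← he'fst w, hvw]
      have h3 : (↑(φ v.2) : Equiv.Perm (Fin m × G))⁻¹ (v.1, 1)
          = (↑(φ w.2) : Equiv.Perm (Fin m × G))⁻¹ (v.1, 1) := by
        simpa only [e', ← h1] using hvw
      have h2 : (↑(φ v.2 * (φ w.2)⁻¹) : Equiv.Perm (Fin m × G)) (v.1, 1) = (v.1, 1) := by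
        simp only [Subgroup.coe_mul, Subgroup.coe_inv, Equiv.Perm.mul_apply]
        rw [← h3]
        exact Equiv.Perm.apply_inv_self _ _
      have h4 := hsemi _ (φ v.2 * (φ w.2)⁻¹).2 _ h2
      have h5 : φ v.2 = φ w.2 := by
        have h6 : φ v.2 * (φ w.2)⁻¹ = 1 := Subtype.ext h4
        exact mul_inv_eq_one.mp h6
      exact Prod.ext h1 (φ.injective h5)
    have he'surj : Function.Surjective e' := by
      rintro ⟨i, z⟩
      obtain ⟨h, hh, hhz⟩ := (horb (i, 1) (i, z)).mpr rfl
      refine ⟨(i, φ.symm (⟨h, hh⟩)⁻¹), ?_⟩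
      simp only [e']
      rw [MulEquiv.apply_symm_apply]
      simpa using hhz
    let E : Equiv.Perm (Fin m × G) := Equiv.ofBijective e' ⟨he'inj, he'surj⟩
    let T : Fin m → Fin m → Set G := fun j k => {t | arcRel m S (e' (j, 1)) (e' (k, t))}
    have hinv : ∀ (x : G) (u v), arcRel m S (e' (Rperm m x u)) (e' (Rperm m x v))
        ↔ arcRel m S (e' u) (e' v) := by
      intro x u v
      rw [he'R, he'R]
      exact hHle ((φ x)⁻¹).2 (e' u) (e' v)
    have hT : ∀ u v, arcRel m T u v ↔ arcRel m S (e' u) (e' v) := by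
      intro u v
      have h0 : arcRel m T u v ↔ arcRel m S (e' (u.1, 1)) (e' (v.1, v.2 * u.2⁻¹)) := Iff.rfl
      rw [h0, ← hinv u.2 (u.1, 1) (v.1, v.2 * u.2⁻¹)]
      simp [Rperm_apply, one_mul, inv_mul_cancel_right]
    have hTempty : ∀ i, T i i = (∅ : Set G) := by
      intro i
      ext t
      simp only [T, Set.mem_setOf_eq, Set.mem_empty_iff_false, iff_false]
      intro hc
      have h1 : (e' (i, t)).1 = i := he'fst _
      have h2 : (e' (i, 1)).1 = i := he'fst _
      simp only [arcRel] at hc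
      rw [h1, h2, hS i] at hc
      exact hc
    have hEinvfst : ∀ v : Fin m × G, (E⁻¹ v).1 = v.1 := by
      intro v
      have h1 := he'fst (E⁻¹ v)
      have h2 : e' (E⁻¹ v) = v := E.apply_inv_self v
      rw [h2] at h1
      exact h1.symm
    have hEarc : ∀ u v, arcRel m S u v ↔ arcRel m T (E⁻¹ u) (E⁻¹ v) := by
      intro u v
      rw [hT]
      rw [show e' (E⁻¹ u) = u from E.apply_inv_self u,
        show e' (E⁻¹ v) = v from E.apply_inv_self v]
    obtain ⟨n, hn, hnarc⟩ := hm T hTempty ⟨E⁻¹, ⟨fun i => i, hEinvfst⟩, hEarc⟩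
    have hnn := Subgroup.mem_normalizer_iff.mp hn
    have hnn' := Subgroup.mem_normalizer_iff.mp ((Subgroup.normalizer ((RG m G : Subgroup (Equiv.Perm (Fin m × G))) : Set (Equiv.Perm (Fin m × G)))).inv_mem hn)
    have hconjE : ∀ g : G, E * Rperm m g * E⁻¹ = (↑((φ g)⁻¹) : Equiv.Perm (Fin m × G)) := by
      intro g
      apply Equiv.ext
      intro w
      have h1 : (E * Rperm m g * E⁻¹) w = e' (Rperm m g (E⁻¹ w)) := rfl
      rw [h1, he'R]
      rw [show e' (E⁻¹ w) = w from E.apply_inv_self w]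
      simp
    refine ⟨E * n, ?_, ?_⟩
    · intro u v
      have h1 : ∀ w, (E * n) w = e' (n w) := fun w => rfl
      rw [h1, h1, ← hT (n u) (n v)]
      exact (hnarc u v).symm
    · apply le_antisymm
      · rintro x hx
        obtain ⟨y, ⟨g, rfl⟩, rfl⟩ := Subgroup.mem_map.mp hx
        obtain ⟨g', hg'⟩ := (hnn (Rperm m g)).mp ⟨g, rfl⟩
        have h2 : (MulAut.conj (E * n)).toMonoidHom (Rperm m g)
            = E * Rperm m g' * E⁻¹ := by
          simp only [MulEquiv.coe_toMonoidHom, MulAut.conj_apply]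
          rw [← hg']
          group
        rw [h2, hconjE g']
        exact ((φ g')⁻¹).2
      · intro h hh
        have hφg : (↑((φ (φ.symm (⟨h, hh⟩)⁻¹))⁻¹) : Equiv.Perm (Fin m × G)) = h := by
          rw [MulEquiv.apply_symm_apply]
          simp
        refine Subgroup.mem_map.mpr ?_
        obtain ⟨g', hg'⟩ := (hnn' (Rperm m (φ.symm (⟨h, hh⟩)⁻¹))).mp ⟨_, rfl⟩
        refine ⟨Rperm m g', ⟨g', rfl⟩, ?_⟩
        simp only [MulEquiv.coe_toMonoidHom, MulAut.conj_apply]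
        have hφg' : E * Rperm m (φ.symm (⟨h, hh⟩)⁻¹) * E⁻¹ = h := by
          rw [hconjE]
          exact hφg
        have hstep : E * n * Rperm m g' * (E * n)⁻¹
            = E * Rperm m (φ.symm (⟨h, hh⟩)⁻¹) * E⁻¹ := by
          rw [← hg']
          group
        rw [hstep]
        exact hφg'
  · -- conjugacy criterion → IsMPCI
    intro hcrit T hT he
    obtain ⟨e, ⟨τ, hτ⟩, harc⟩ := he
    rcases Nat.eq_zero_or_pos m with hm0 | hmpos
    · subst hm0
      exact ⟨1, Subgroup.one_mem _, fun u v => u.1.elim0⟩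
    have hmemH : ∀ x, x ∈ Subgroup.map (MulAut.conj e⁻¹).toMonoidHom (RG m G)
        ↔ ∃ g : G, x = e⁻¹ * Rperm m g * e := by
      intro x
      simp only [Subgroup.mem_map, mem_RG_iff]
      constructor
      · rintro ⟨y, ⟨g, rfl⟩, rfl⟩
        exact ⟨g, by simp [MulAut.conj_apply]⟩
      · rintro ⟨g, rfl⟩
        exact ⟨Rperm m g, ⟨g, rfl⟩, by simp [MulAut.conj_apply]⟩
    have hτsurj : Function.Surjective τ := by
      intro j
      refine ⟨(e.symm (j, 1)).1, ?_⟩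
      have h1 := hτ (e.symm (j, 1))
      rw [Equiv.apply_symm_apply] at h1
      exact h1.symm
    have hτinj : Function.Injective τ := Finite.injective_iff_surjective.mpr hτsurj
    have hHAut : Subgroup.map (MulAut.conj e⁻¹).toMonoidHom (RG m G) ≤ digraphAut m G S := by
      intro x hx
      obtain ⟨g, rfl⟩ := (hmemH x).mp hx
      intro u v
      have h1 : ∀ w, (e⁻¹ * Rperm m g * e) w = e⁻¹ (Rperm m g (e w)) := fun w => rfl
      rw [h1, h1]
      calc arcRel m S (e⁻¹ (Rperm m g (e u))) (e⁻¹ (Rperm m g (e v)))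
          ↔ arcRel m T (e (e⁻¹ (Rperm m g (e u)))) (e (e⁻¹ (Rperm m g (e v)))) := harc _ _
        _ ↔ arcRel m T (Rperm m g (e u)) (Rperm m g (e v)) := by
            rw [Equiv.Perm.apply_inv_self, Equiv.Perm.apply_inv_self]
        _ ↔ arcRel m T (e u) (e v) := arcRel_Rperm T g (e u) (e v)
        _ ↔ arcRel m S u v := (harc u v).symm
    have hHsemi : ∀ x ∈ Subgroup.map (MulAut.conj e⁻¹).toMonoidHom (RG m G),
        ∀ v : Fin m × G, x v = v → x = 1 := by
      intro x hx v hv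
      obtain ⟨g, rfl⟩ := (hmemH x).mp hx
      have h2 : Rperm m g (e v) = e v := by
        have h3 := congrArg e hv
        have h4 : ∀ w, (e⁻¹ * Rperm m g * e) w = e⁻¹ (Rperm m g (e w)) := fun w => rfl
        rw [h4, Equiv.Perm.apply_inv_self] at h3
        exact h3
      have hg : g = 1 := by
        have h5 := congrArg Prod.snd h2
        simpa using h5
      subst hg
      simp
    have hHorb : ∀ v w : Fin m × G,
        (∃ x ∈ Subgroup.map (MulAut.conj e⁻¹).toMonoidHom (RG m G), x v = w) ↔ v.1 = w.1 := by
      intro v w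
      constructor
      · rintro ⟨x, hx, rfl⟩
        obtain ⟨g, rfl⟩ := (hmemH x).mp hx
        have h3 : e ((e⁻¹ * Rperm m g * e) v) = Rperm m g (e v) := by
          have h4 : ∀ w, (e⁻¹ * Rperm m g * e) w = e⁻¹ (Rperm m g (e w)) := fun w => rfl
          rw [h4, Equiv.Perm.apply_inv_self]
        apply hτinj
        rw [← hτ v, ← hτ ((e⁻¹ * Rperm m g * e) v), h3]
        rfl
      · intro hvw
        refine ⟨e⁻¹ * Rperm m ((e v).2⁻¹ * (e w).2) * e, (hmemH _).mpr ⟨_, rfl⟩, ?_⟩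
        have hfst2 : (e v).1 = (e w).1 := by rw [hτ, hτ, hvw]
        have h6 : Rperm m ((e v).2⁻¹ * (e w).2) (e v) = e w := by
          rw [Rperm_apply]
          exact Prod.ext hfst2 (by rw [mul_inv_cancel_left])
        show e⁻¹ (Rperm m ((e v).2⁻¹ * (e w).2) (e v)) = w
        rw [h6]
        exact e.inv_apply_self w
    have hiso : Nonempty ((Subgroup.map (MulAut.conj e⁻¹).toMonoidHom (RG m G)) ≃* G) := by
      let ψ : G →* Subgroup.map (MulAut.conj e⁻¹).toMonoidHom (RG m G) :=
        { toFun := fun g => ⟨e⁻¹ * Rperm m g⁻¹ * e, (hmemH _).mpr ⟨g⁻¹, rfl⟩⟩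
          map_one' := by
            ext1
            simp [Rperm_one]
          map_mul' := by
            intro g g'
            ext1
            simp only [Subgroup.coe_mul]
            rw [mul_inv_rev, ← Rperm_mul]
            group }
      have hinj : Function.Injective ψ := by
        intro g g' hgg'
        have h7 : e⁻¹ * Rperm m g⁻¹ * e = e⁻¹ * Rperm m g'⁻¹ * e :=
          congrArg (fun x : Subgroup.map (MulAut.conj e⁻¹).toMonoidHom (RG m G) =>
            (x : Equiv.Perm (Fin m × G))) hgg'
        have h8 := mul_left_cancel (mul_right_cancel h7)
        exact inv_injective (Rperm_injective hmpos h8)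
      have hsurj : Function.Surjective ψ := by
        rintro ⟨x, hx⟩
        obtain ⟨g, rfl⟩ := (hmemH x).mp hx
        refine ⟨g⁻¹, ?_⟩
        ext1
        show e⁻¹ * Rperm m g⁻¹⁻¹ * e = e⁻¹ * Rperm m g * e
        rw [inv_inv]
      exact ⟨(MulEquiv.ofBijective ψ ⟨hinj, hsurj⟩).symm⟩
    obtain ⟨a, haAut, hamap⟩ := hcrit _ hHAut hHsemi hHorb hiso
    refine ⟨e * a, ?_, ?_⟩
    · rw [Subgroup.mem_normalizer_iff]
      intro x
      constructor
      · rintro ⟨g, rfl⟩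
        have h1 : (MulAut.conj a).toMonoidHom (Rperm m g)
            ∈ Subgroup.map (MulAut.conj e⁻¹).toMonoidHom (RG m G) := by
          rw [← hamap]
          exact Subgroup.mem_map_of_mem _ ⟨g, rfl⟩
        obtain ⟨g', hg'⟩ := (hmemH _).mp h1
        refine ⟨g', ?_⟩
        have h2 : a * Rperm m g * a⁻¹ = e⁻¹ * Rperm m g' * e := by
          simpa [MulAut.conj_apply] using hg'
        calc e * a * Rperm m g * (e * a)⁻¹
            = e * (a * Rperm m g * a⁻¹) * e⁻¹ := by group
          _ = e * (e⁻¹ * Rperm m g' * e) * e⁻¹ := by rw [h2]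
          _ = Rperm m g' := by group
      · rintro ⟨g, hg⟩
        have h1 : e⁻¹ * Rperm m g * e ∈ Subgroup.map (MulAut.conj e⁻¹).toMonoidHom (RG m G) :=
          (hmemH _).mpr ⟨g, rfl⟩
        rw [← hamap] at h1
        obtain ⟨y, ⟨g', rfl⟩, hy2⟩ := Subgroup.mem_map.mp h1
        simp only [MulEquiv.coe_toMonoidHom, MulAut.conj_apply] at hy2
        refine ⟨g', ?_⟩
        have hx : x = a⁻¹ * (e⁻¹ * Rperm m g * e) * a := by
          rw [← hg]
          group
        rw [hx, ← hy2]
        group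
    · intro u v
      have h1 : ∀ w, (e * a) w = e (a w) := fun w => rfl
      rw [h1, h1]
      exact (haAut u v).symm.trans (harc (a u) (a v))
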